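/- (Laurent expansion, right version.) Let ζ₀ ∈ E₃, ξ₁₀ = f₁(ζ₀), ξ₂₀ = f₂(ζ₀), and 0 ≤ r < R ≤ ∞. Let F₁, F₃ be holomorphic on the annulus {ξ ∈ ℂ : r < |ξ − ξ₁₀| < R} with Laurent expansions F₁(ξ) = ∑_{n∈ℤ} aₙ(ξ − ξ₁₀)ⁿ, F₃(ξ) = ∑_{n∈ℤ} cₙ(ξ − ξ₁₀)ⁿ, and F₂, F₄ holomorphic on {ξ ∈ ℂ : r < |ξ − ξ₂₀| < R} with Laurent expansions F₂(ξ) = ∑_{n∈ℤ} bₙ(ξ − ξ₂₀)ⁿ, F₄(ξ) = ∑_{n∈ℤ} dₙ(ξ − ξ₂₀)ⁿ. Define Φ on K_ζ = {ζ ∈ E₃ : r < |f₁(ζ) − ξ₁₀| < R, r < |f₂(ζ) − ξ₂₀| < R} by Φ(ζ) = F₁(ξ₁)e₁ + F₂(ξ₂)e₂ + F₃(ξ₁)e₃ + F₄(ξ₂)e₄ with ξ₁ = f₁(ζ), ξ₂ = f₂(ζ). Then for every ζ ∈ K_ζ the two-sided series ∑_{n∈ℤ} (ζ − ζ₀)ⁿ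 pₙ, with pₙ = aₙe₁ + bₙe₂ + cₙe₃ + dₙe₄ and (ζ − ζ₀)ⁿ := ((ζ − ζ₀)⁻¹)^(−n) for negative n, converges absolutely in the norm of ℍ(ℂ) and its sum equals Φ(ζ). -/

import Mathlib

noncomputable section

/-- The algebra of complex quaternions ℍ(ℂ): quaternions over ℂ with
I² = J² = K² = -1, IJ = -JI = K, JK = -KJ = I, KI = -IK = J. -/
abbrev HC : Type := Quaternion ℂ

/-- The quaternion unit I. -/
def Iq : HC := ⟨0, 1, 0, 0⟩
/-- The quaternion unit J. -/
def Jq : HC := ⟨0, 0, 1, 0⟩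
/-- The quaternion unit K. -/
def Kq : HC := ⟨0, 0, 0, 1⟩

/-- e₁ = (1 + iI)/2. -/
def e1 : HC := (2 : ℂ)⁻¹ • (1 + Complex.I • Iq)
/-- e₂ = (1 - iI)/2. -/
def e2 : HC := (2 : ℂ)⁻¹ • (1 - Complex.I • Iq)
/-- e₃ = (iJ - K)/2. -/
def e3 : HC := (2 : ℂ)⁻¹ • (Complex.I • Jq - Kq)
/-- e₄ = (iJ + K)/2. -/
def e4 : HC := (2 : ℂ)⁻¹ • (Complex.I • Jq + Kq)

/-- The coefficient c₁ of q in the basis {e₁,e₂,e₃,e₄} (q = c₁e₁ + c₂e₂ + c₃e₃ + c₄e₄). -/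
def coord1 (q : HC) : ℂ := q.re - Complex.I * q.imI
/-- The coefficient c₂ of q in the basis {e₁,e₂,e₃,e₄}. -/
def coord2 (q : HC) : ℂ := q.re + Complex.I * q.imI
/-- The coefficient c₃ of q in the basis {e₁,e₂,e₃,e₄}. -/
def coord3 (q : HC) : ℂ := -(Complex.I * q.imJ) - q.imK
/-- The coefficient c₄ of q in the basis {e₁,e₂,e₃,e₄}. -/
def coord4 (q : HC) : ℂ := -(Complex.I * q.imJ) + q.imK

/-- The norm ‖c‖ = √(|c₁|² + |c₂|² + |c₃|² + |c₄|²) of c = c₁e₁ + c₂e₂ + c₃e₃ + c₄e₄. -/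
def hnorm (q : HC) : ℝ :=
  Real.sqrt (‖coord1 q‖ ^ 2 + ‖coord2 q‖ ^ 2 +
    ‖coord3 q‖ ^ 2 + ‖coord4 q‖ ^ 2)

/-- i₂ = a₁e₁ + a₂e₂. -/
def i2 (a₁ a₂ : ℂ) : HC := a₁ • e1 + a₂ • e2
/-- i₃ = b₁e₁ + b₂e₂. -/
def i3 (b₁ b₂ : ℂ) : HC := b₁ • e1 + b₂ • e2

/-- ζ = x·i₁ + y·i₂ + z·i₃ with i₁ = 1. -/
def zeta (a₁ a₂ b₁ b₂ : ℂ) (x y z : ℝ) : HC :=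
  (x : ℂ) • (1 : HC) + (y : ℂ) • i2 a₁ a₂ + (z : ℂ) • i3 b₁ b₂

/-- E₃ = {x i₁ + y i₂ + z i₃ : x, y, z ∈ ℝ}. -/
def E3 (a₁ a₂ b₁ b₂ : ℂ) : Set HC :=
  {q | ∃ x y z : ℝ, q = zeta a₁ a₂ b₁ b₂ x y z}

/-- ξ₁ = f₁(ζ) = x + y a₁ + z b₁. -/
def xi1 (a₁ b₁ : ℂ) (x y z : ℝ) : ℂ := (x : ℂ) + (y : ℂ) * a₁ + (z : ℂ) * b₁
/-- ξ₂ = f₂(ζ) = x + y a₂ + z b₂. -/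
def xi2 (a₂ b₂ : ℂ) (x y z : ℝ) : ℂ := (x : ℂ) + (y : ℂ) * a₂ + (z : ℂ) * b₂

/-- Integer powers in ℍ(ℂ): for n < 0, qⁿ := (q⁻¹)^(-n) where q⁻¹ = Ring.inverse q. -/
def zpowQ (q : HC) (n : ℤ) : HC :=
  if 0 ≤ n then q ^ n.toNat else (Ring.inverse q) ^ (-n).toNat

/-- A two-sided (ℤ-indexed) series ∑ f n converges unconditionally to s in the norm
of ℍ(ℂ). -/
def ZSeriesTendsto (f : ℤ → HC) (s : HC) : Prop :=
  Filter.Tendsto (fun A : Finset ℤ => hnorm ((∑ n ∈ A, f n) - s))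
    Filter.atTop (nhds 0)


section Aux

open scoped Quaternion QuaternionAlgebra

@[simp] lemma hc_smul_re (c : ℂ) (q : HC) : (c • q).re = c * q.re := rfl
@[simp] lemma hc_smul_imI (c : ℂ) (q : HC) : (c • q).imI = c * q.imI := rfl
@[simp] lemma hc_smul_imJ (c : ℂ) (q : HC) : (c • q).imJ = c * q.imJ := rfl
@[simp] lemma hc_smul_imK (c : ℂ) (q : HC) : (c • q).imK = c * q.imK := rfl
@[simp] lemma hc_rsmul_re (c : ℝ) (q : HC) : (c • q).re = c • q.re := rfl
@[simp] lemma hc_rsmul_imI (c : ℝ) (q : HC) : (c • q).imI = c • q.imI := rfl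
@[simp] lemma hc_rsmul_imJ (c : ℝ) (q : HC) : (c • q).imJ = c • q.imJ := rfl
@[simp] lemma hc_rsmul_imK (c : ℝ) (q : HC) : (c • q).imK = c • q.imK := rfl
@[simp] lemma hc_one_re : (1 : HC).re = 1 := rfl
@[simp] lemma hc_one_imI : (1 : HC).imI = 0 := rfl
@[simp] lemma hc_one_imJ : (1 : HC).imJ = 0 := rfl
@[simp] lemma hc_one_imK : (1 : HC).imK = 0 := rfl
@[simp] lemma hc_mul_re (p q : HC) :
    (p * q).re = p.re * q.re - p.imI * q.imI - p.imJ * q.imJ - p.imK * q.imK := by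
  simp [Quaternion.re_mul]
@[simp] lemma hc_mul_imI (p q : HC) :
    (p * q).imI = p.re * q.imI + p.imI * q.re + p.imJ * q.imK - p.imK * q.imJ := by
  simp [Quaternion.imI_mul]
@[simp] lemma hc_mul_imJ (p q : HC) :
    (p * q).imJ = p.re * q.imJ - p.imI * q.imK + p.imJ * q.re + p.imK * q.imI := by
  simp [Quaternion.imJ_mul]
@[simp] lemma hc_mul_imK (p q : HC) :
    (p * q).imK = p.re * q.imK + p.imI * q.imJ - p.imJ * q.imI + p.imK * q.re := by
  simp [Quaternion.imK_mul]
@[simp] lemma Iq_re : Iq.re = 0 := rfl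
@[simp] lemma Iq_imI : Iq.imI = 1 := rfl
@[simp] lemma Iq_imJ : Iq.imJ = 0 := rfl
@[simp] lemma Iq_imK : Iq.imK = 0 := rfl
@[simp] lemma Jq_re : Jq.re = 0 := rfl
@[simp] lemma Jq_imI : Jq.imI = 0 := rfl
@[simp] lemma Jq_imJ : Jq.imJ = 1 := rfl
@[simp] lemma Jq_imK : Jq.imK = 0 := rfl
@[simp] lemma Kq_re : Kq.re = 0 := rfl
@[simp] lemma Kq_imI : Kq.imI = 0 := rfl
@[simp] lemma Kq_imJ : Kq.imJ = 0 := rfl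
@[simp] lemma Kq_imK : Kq.imK = 1 := rfl

lemma e1_add_e2 : e1 + e2 = (1 : HC) := by
  apply Quaternion.ext <;> simp [e1, e2] <;> ring

lemma diag_mul' (u v p q s t : ℂ) :
    (u • e1 + v • e2) * (p • e1 + q • e2 + s • e3 + t • e4) =
    (u*p) • e1 + (v*q) • e2 + (u*s) • e3 + (v*t) • e4 := by
  apply Quaternion.ext <;>
  simp [e1, e2, e3, e4] <;> ring_nf <;>
  simp [Complex.I_sq] <;> ring

lemma diag_mul2 (u v p q : ℂ) :
    (u • e1 + v • e2) * (p • e1 + q • e2) = (u*p) • e1 + (v*q) • e2 := by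
  apply Quaternion.ext <;>
  simp [e1, e2] <;> ring_nf <;>
  simp [Complex.I_sq] <;> ring

lemma diag_pow (u v : ℂ) (m : ℕ) :
    (u • e1 + v • e2) ^ m = (u ^ m) • e1 + (v ^ m) • e2 := by
  induction m with
  | zero => simpa using e1_add_e2.symm
  | succ m ih => rw [pow_succ, ih, diag_mul2, ← pow_succ, ← pow_succ]

lemma diag_inverse (u v : ℂ) (hu : u ≠ 0) (hv : v ≠ 0) :
    Ring.inverse (u • e1 + v • e2) = u⁻¹ • e1 + v⁻¹ • e2 := by
  have h1 : (u • e1 + v • e2) * (u⁻¹ • e1 + v⁻¹ • e2) = 1 := by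
    rw [diag_mul2, mul_inv_cancel₀ hu, mul_inv_cancel₀ hv, one_smul, one_smul, e1_add_e2]
  have h2 : (u⁻¹ • e1 + v⁻¹ • e2) * (u • e1 + v • e2) = 1 := by
    rw [diag_mul2, inv_mul_cancel₀ hu, inv_mul_cancel₀ hv, one_smul, one_smul, e1_add_e2]
  exact Ring.inverse_unit ⟨u • e1 + v • e2, u⁻¹ • e1 + v⁻¹ • e2, h1, h2⟩

lemma zpowQ_diag (u v : ℂ) (hu : u ≠ 0) (hv : v ≠ 0) (n : ℤ) :
    zpowQ (u • e1 + v • e2) n = (u ^ n) • e1 + (v ^ n) • e2 := by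
  unfold zpowQ
  split_ifs with h
  · rw [diag_pow]
    rw [show (u : ℂ) ^ n.toNat = u ^ n by
        rw [← zpow_natCast, Int.toNat_of_nonneg h],
      show (v : ℂ) ^ n.toNat = v ^ n by
        rw [← zpow_natCast, Int.toNat_of_nonneg h]]
  · push_neg at h
    rw [diag_inverse u v hu hv, diag_pow]
    rw [show (u⁻¹ : ℂ) ^ (-n).toNat = u ^ n by
        rw [← zpow_natCast, Int.toNat_of_nonneg (by omega), inv_zpow', neg_neg],
      show (v⁻¹ : ℂ) ^ (-n).toNat = v ^ n by
        rw [← zpow_natCast, Int.toNat_of_nonneg (by omega), inv_zpow', neg_neg]]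

lemma coord_vals (p q s t : ℂ) :
    coord1 (p • e1 + q • e2 + s • e3 + t • e4) = p ∧
    coord2 (p • e1 + q • e2 + s • e3 + t • e4) = q ∧
    coord3 (p • e1 + q • e2 + s • e3 + t • e4) = s ∧
    coord4 (p • e1 + q • e2 + s • e3 + t • e4) = t := by
  refine ⟨?_, ?_, ?_, ?_⟩ <;>
  simp [coord1, coord2, coord3, coord4, e1, e2, e3, e4] <;> ring_nf <;>
  simp [Complex.I_sq] <;> ring

lemma hnorm_val (p q s t : ℂ) :
    hnorm (p • e1 + q • e2 + s • e3 + t • e4) =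
    Real.sqrt (‖p‖ ^ 2 + ‖q‖ ^ 2 +
      ‖s‖ ^ 2 + ‖t‖ ^ 2) := by
  obtain ⟨h1, h2, h3, h4⟩ := coord_vals p q s t
  rw [hnorm, h1, h2, h3, h4]

lemma hnorm_nonneg (q : HC) : 0 ≤ hnorm q := Real.sqrt_nonneg _

lemma hnorm_le (p q s t : ℂ) :
    hnorm (p • e1 + q • e2 + s • e3 + t • e4) ≤
    ‖p‖ + ‖q‖ + ‖s‖ + ‖t‖ := by
  rw [hnorm_val]
  have hb : ‖p‖ ^ 2 + ‖q‖ ^ 2 + ‖s‖ ^ 2 + ‖t‖ ^ 2 ≤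
      (‖p‖ + ‖q‖ + ‖s‖ + ‖t‖) ^ 2 := by
    nlinarith [norm_nonneg p, norm_nonneg q, norm_nonneg s,
      norm_nonneg t, mul_nonneg (norm_nonneg p) (norm_nonneg q)]
  calc Real.sqrt (‖p‖ ^ 2 + ‖q‖ ^ 2 + ‖s‖ ^ 2 + ‖t‖ ^ 2)
      ≤ Real.sqrt ((‖p‖ + ‖q‖ + ‖s‖ + ‖t‖) ^ 2) :=
        Real.sqrt_le_sqrt hb
    _ = _ := Real.sqrt_sq (by positivity)

lemma zeta_sub (a₁ a₂ b₁ b₂ : ℂ) (x y z x₀ y₀ z₀ : ℝ) :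
    zeta a₁ a₂ b₁ b₂ x y z - zeta a₁ a₂ b₁ b₂ x₀ y₀ z₀ =
    (xi1 a₁ b₁ x y z - xi1 a₁ b₁ x₀ y₀ z₀) • e1 +
    (xi2 a₂ b₂ x y z - xi2 a₂ b₂ x₀ y₀ z₀) • e2 := by
  apply Quaternion.ext <;>
  simp [zeta, i2, i3, xi1, xi2, e1, e2, -Complex.coe_smul] <;> ring

lemma quad_sub (p q s t p' q' s' t' : ℂ) :
    (p • e1 + q • e2 + s • e3 + t • e4) - (p' • e1 + q' • e2 + s' • e3 + t' • e4) =
    (p - p') • e1 + (q - q') • e2 + (s - s') • e3 + (t - t') • e4 := by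
  apply Quaternion.ext <;>
  simp [e1, e2, e3, e4] <;> ring

lemma sum_quad (A : Finset ℤ) (P Q S T : ℤ → ℂ) :
    ∑ n ∈ A, (P n • e1 + Q n • e2 + S n • e3 + T n • e4) =
    (∑ n ∈ A, P n) • e1 + (∑ n ∈ A, Q n) • e2 +
    (∑ n ∈ A, S n) • e3 + (∑ n ∈ A, T n) • e4 := by
  have h1 : ∑ n ∈ A, P n • e1 = (∑ n ∈ A, P n) • e1 :=
    (Finset.sum_smul (f := P) (s := A) (x := e1)).symm
  have h2 : ∑ n ∈ A, Q n • e2 = (∑ n ∈ A, Q n) • e2 :=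
    (Finset.sum_smul (f := Q) (s := A) (x := e2)).symm
  have h3 : ∑ n ∈ A, S n • e3 = (∑ n ∈ A, S n) • e3 :=
    (Finset.sum_smul (f := S) (s := A) (x := e3)).symm
  have h4 : ∑ n ∈ A, T n • e4 = (∑ n ∈ A, T n) • e4 :=
    (Finset.sum_smul (f := T) (s := A) (x := e4)).symm
  rw [Finset.sum_add_distrib, Finset.sum_add_distrib, Finset.sum_add_distrib, h1, h2, h3, h4]

end Aux

/-- Laurent expansion, right version: if F₁, F₃ are holomorphic on the
annulus {r < |ξ - ξ₁₀| < R} with Laurent coefficients aₙ, cₙ, and F₂, F₄ on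
{r < |ξ - ξ₂₀| < R} with Laurent coefficients bₙ, dₙ, and
Φ(ζ) = F₁(ξ₁)e₁ + F₂(ξ₂)e₂ + F₃(ξ₁)e₃ + F₄(ξ₂)e₄ on K_ζ, then for every ζ ∈ K_ζ the
series ∑_{n∈ℤ} (ζ-ζ₀)ⁿpₙ, pₙ = aₙe₁ + bₙe₂ + cₙe₃ + dₙe₄, converges absolutely in the
norm of ℍ(ℂ) to Φ(ζ). -/
theorem laurent_right (a₁ a₂ b₁ b₂ : ℂ) (x₀ y₀ z₀ : ℝ) (r R : ENNReal) (hrR : r < R)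
    (F₁ F₂ F₃ F₄ : ℂ → ℂ) (a b c d : ℤ → ℂ)
    (hF₁ : DifferentiableOn ℂ F₁
      {ξ : ℂ | r < ENNReal.ofReal (‖ξ - xi1 a₁ b₁ x₀ y₀ z₀‖) ∧
        ENNReal.ofReal (‖ξ - xi1 a₁ b₁ x₀ y₀ z₀‖) < R})
    (hF₃ : DifferentiableOn ℂ F₃
      {ξ : ℂ | r < ENNReal.ofReal (‖ξ - xi1 a₁ b₁ x₀ y₀ z₀‖) ∧
        ENNReal.ofReal (‖ξ - xi1 a₁ b₁ x₀ y₀ z₀‖) < R})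
    (hF₂ : DifferentiableOn ℂ F₂
      {ξ : ℂ | r < ENNReal.ofReal (‖ξ - xi2 a₂ b₂ x₀ y₀ z₀‖) ∧
        ENNReal.ofReal (‖ξ - xi2 a₂ b₂ x₀ y₀ z₀‖) < R})
    (hF₄ : DifferentiableOn ℂ F₄
      {ξ : ℂ | r < ENNReal.ofReal (‖ξ - xi2 a₂ b₂ x₀ y₀ z₀‖) ∧
        ENNReal.ofReal (‖ξ - xi2 a₂ b₂ x₀ y₀ z₀‖) < R})
    (ha : ∀ ξ : ℂ, r < ENNReal.ofReal (‖ξ - xi1 a₁ b₁ x₀ y₀ z₀‖) →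
      ENNReal.ofReal (‖ξ - xi1 a₁ b₁ x₀ y₀ z₀‖) < R →
      HasSum (fun n : ℤ => a n * (ξ - xi1 a₁ b₁ x₀ y₀ z₀) ^ n) (F₁ ξ))
    (hc : ∀ ξ : ℂ, r < ENNReal.ofReal (‖ξ - xi1 a₁ b₁ x₀ y₀ z₀‖) →
      ENNReal.ofReal (‖ξ - xi1 a₁ b₁ x₀ y₀ z₀‖) < R →
      HasSum (fun n : ℤ => c n * (ξ - xi1 a₁ b₁ x₀ y₀ z₀) ^ n) (F₃ ξ))
    (hb : ∀ ξ : ℂ, r < ENNReal.ofReal (‖ξ - xi2 a₂ b₂ x₀ y₀ z₀‖) →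
      ENNReal.ofReal (‖ξ - xi2 a₂ b₂ x₀ y₀ z₀‖) < R →
      HasSum (fun n : ℤ => b n * (ξ - xi2 a₂ b₂ x₀ y₀ z₀) ^ n) (F₂ ξ))
    (hd : ∀ ξ : ℂ, r < ENNReal.ofReal (‖ξ - xi2 a₂ b₂ x₀ y₀ z₀‖) →
      ENNReal.ofReal (‖ξ - xi2 a₂ b₂ x₀ y₀ z₀‖) < R →
      HasSum (fun n : ℤ => d n * (ξ - xi2 a₂ b₂ x₀ y₀ z₀) ^ n) (F₄ ξ))
    (x y z : ℝ)
    (h₁l : r < ENNReal.ofReal (‖xi1 a₁ b₁ x y z - xi1 a₁ b₁ x₀ y₀ z₀‖))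
    (h₁r : ENNReal.ofReal (‖xi1 a₁ b₁ x y z - xi1 a₁ b₁ x₀ y₀ z₀‖) < R)
    (h₂l : r < ENNReal.ofReal (‖xi2 a₂ b₂ x y z - xi2 a₂ b₂ x₀ y₀ z₀‖))
    (h₂r : ENNReal.ofReal (‖xi2 a₂ b₂ x y z - xi2 a₂ b₂ x₀ y₀ z₀‖) < R) :
    Summable (fun n : ℤ =>
      hnorm (zpowQ (zeta a₁ a₂ b₁ b₂ x y z - zeta a₁ a₂ b₁ b₂ x₀ y₀ z₀) n *
        (a n • e1 + b n • e2 + c n • e3 + d n • e4))) ∧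
    ZSeriesTendsto (fun n : ℤ =>
      zpowQ (zeta a₁ a₂ b₁ b₂ x y z - zeta a₁ a₂ b₁ b₂ x₀ y₀ z₀) n *
        (a n • e1 + b n • e2 + c n • e3 + d n • e4))
      (F₁ (xi1 a₁ b₁ x y z) • e1 + F₂ (xi2 a₂ b₂ x y z) • e2 +
       F₃ (xi1 a₁ b₁ x y z) • e3 + F₄ (xi2 a₂ b₂ x y z) • e4) := by
  set w₁ := xi1 a₁ b₁ x y z - xi1 a₁ b₁ x₀ y₀ z₀ with hw₁def
  set w₂ := xi2 a₂ b₂ x y z - xi2 a₂ b₂ x₀ y₀ z₀ with hw₂def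
  have hw₁0 : w₁ ≠ 0 := by
    intro h
    rw [h] at h₁l
    simp at h₁l
  have hw₂0 : w₂ ≠ 0 := by
    intro h
    rw [h] at h₂l
    simp at h₂l
  have HA := ha (xi1 a₁ b₁ x y z) h₁l h₁r
  have HB := hb (xi2 a₂ b₂ x y z) h₂l h₂r
  have HC3 := hc (xi1 a₁ b₁ x y z) h₁l h₁r
  have HD := hd (xi2 a₂ b₂ x y z) h₂l h₂r
  rw [← hw₁def] at HA HC3
  rw [← hw₂def] at HB HD
  have hterm : ∀ n : ℤ,
      zpowQ (zeta a₁ a₂ b₁ b₂ x y z - zeta a₁ a₂ b₁ b₂ x₀ y₀ z₀) n *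
        (a n • e1 + b n • e2 + c n • e3 + d n • e4) =
      (a n * w₁ ^ n) • e1 + (b n * w₂ ^ n) • e2 +
      (c n * w₁ ^ n) • e3 + (d n * w₂ ^ n) • e4 := by
    intro n
    rw [zeta_sub, ← hw₁def, ← hw₂def, zpowQ_diag _ _ hw₁0 hw₂0, diag_mul',
      mul_comm (w₁ ^ n) (a n), mul_comm (w₂ ^ n) (b n),
      mul_comm (w₁ ^ n) (c n), mul_comm (w₂ ^ n) (d n)]
  have SA : Summable (fun n : ℤ => ‖a n * w₁ ^ n‖) := by
    simpa using summable_norm_iff.mpr HA.summable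
  have SB : Summable (fun n : ℤ => ‖b n * w₂ ^ n‖) := by
    simpa using summable_norm_iff.mpr HB.summable
  have SC : Summable (fun n : ℤ => ‖c n * w₁ ^ n‖) := by
    simpa using summable_norm_iff.mpr HC3.summable
  have SD : Summable (fun n : ℤ => ‖d n * w₂ ^ n‖) := by
    simpa using summable_norm_iff.mpr HD.summable
  constructor
  · refine Summable.of_nonneg_of_le (fun n => hnorm_nonneg _) (fun n => ?_)
      (((SA.add SB).add SC).add SD)
    rw [hterm n]
    exact hnorm_le _ _ _ _
  · unfold ZSeriesTendsto
    have key : ∀ A : Finset ℤ,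
        (∑ n ∈ A, zpowQ (zeta a₁ a₂ b₁ b₂ x y z - zeta a₁ a₂ b₁ b₂ x₀ y₀ z₀) n *
          (a n • e1 + b n • e2 + c n • e3 + d n • e4)) -
        (F₁ (xi1 a₁ b₁ x y z) • e1 + F₂ (xi2 a₂ b₂ x y z) • e2 +
         F₃ (xi1 a₁ b₁ x y z) • e3 + F₄ (xi2 a₂ b₂ x y z) • e4) =
        ((∑ n ∈ A, a n * w₁ ^ n) - F₁ (xi1 a₁ b₁ x y z)) • e1 +
        ((∑ n ∈ A, b n * w₂ ^ n) - F₂ (xi2 a₂ b₂ x y z)) • e2 +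
        ((∑ n ∈ A, c n * w₁ ^ n) - F₃ (xi1 a₁ b₁ x y z)) • e3 +
        ((∑ n ∈ A, d n * w₂ ^ n) - F₄ (xi2 a₂ b₂ x y z)) • e4 := by
      intro A
      simp only [hterm]
      rw [sum_quad, quad_sub]
    have TA : Filter.Tendsto
        (fun A : Finset ℤ => ‖(∑ n ∈ A, a n * w₁ ^ n) - F₁ (xi1 a₁ b₁ x y z)‖)
        Filter.atTop (nhds 0) := by
      simpa using tendsto_iff_norm_sub_tendsto_zero.mp HA
    have TB : Filter.Tendsto
        (fun A : Finset ℤ => ‖(∑ n ∈ A, b n * w₂ ^ n) - F₂ (xi2 a₂ b₂ x y z)‖)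
        Filter.atTop (nhds 0) := by
      simpa using tendsto_iff_norm_sub_tendsto_zero.mp HB
    have TC : Filter.Tendsto
        (fun A : Finset ℤ => ‖(∑ n ∈ A, c n * w₁ ^ n) - F₃ (xi1 a₁ b₁ x y z)‖)
        Filter.atTop (nhds 0) := by
      simpa using tendsto_iff_norm_sub_tendsto_zero.mp HC3
    have TD : Filter.Tendsto
        (fun A : Finset ℤ => ‖(∑ n ∈ A, d n * w₂ ^ n) - F₄ (xi2 a₂ b₂ x y z)‖)
        Filter.atTop (nhds 0) := by
      simpa using tendsto_iff_norm_sub_tendsto_zero.mp HD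
    have Tg : Filter.Tendsto
        (fun A : Finset ℤ =>
          ‖(∑ n ∈ A, a n * w₁ ^ n) - F₁ (xi1 a₁ b₁ x y z)‖ +
          ‖(∑ n ∈ A, b n * w₂ ^ n) - F₂ (xi2 a₂ b₂ x y z)‖ +
          ‖(∑ n ∈ A, c n * w₁ ^ n) - F₃ (xi1 a₁ b₁ x y z)‖ +
          ‖(∑ n ∈ A, d n * w₂ ^ n) - F₄ (xi2 a₂ b₂ x y z)‖)
        Filter.atTop (nhds 0) := by
      simpa using ((TA.add TB).add TC).add TD
    refine squeeze_zero (fun A => hnorm_nonneg _) (fun A => ?_) Tg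
    rw [key A]
    exact hnorm_le _ _ _ _
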